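/- arXiv:2207.09882 — 2 statements merged into one kernel-verified Lean document; each statement's English description precedes it below -/
import Mathlib

section
/- For block upper-triangular matrices, if A and C are n×n complex matrices, then exp([[A, C],[0, A]]) = [[e^A, D],[0, e^A]] where D = ∫₀¹ e^{sA} C e^{(1-s)A} ds, which equals the directional (Gateaux) derivative of the matrix exponential at A in direction C. -/
open Matrix NormedSpace

attribute [local instance] Matrix.linftyOpNormedRing Matrix.linftyOpNormedAlgebra

namespace VanLoanAux

open intervalIntegral MeasureTheory

theorem duhamel {𝔸 : Type*} [NormedRing 𝔸] [NormedAlgebra ℝ 𝔸] [NormedAlgebra ℚ 𝔸] [CompleteSpace 𝔸] (X Y : 𝔸) :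
    exp X = exp Y + ∫ s in (0:ℝ)..1, exp (s • X) * (X - Y) * exp ((1 - s) • Y) := by
  have hcont : Continuous fun s : ℝ => exp (s • X) * (X - Y) * exp ((1 - s) • Y) :=
    ((exp_continuous.comp (continuous_id.smul continuous_const)).mul continuous_const).mul
      (exp_continuous.comp ((continuous_const.sub continuous_id).smul continuous_const))
  have hderiv : ∀ s ∈ Set.uIcc (0:ℝ) 1,
      HasDerivAt (fun s : ℝ => exp (s • X) * exp ((1 - s) • Y))
        (exp (s • X) * (X - Y) * exp ((1 - s) • Y)) s := by
    intro s _
    have h1 : HasDerivAt (fun u : ℝ => exp (u • X)) (exp (s • X) * X) s :=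
      hasDerivAt_exp_smul_const X s
    have h2 : HasDerivAt (fun u : ℝ => exp ((1 - u) • Y))
        ((-1 : ℝ) • (exp ((1 - s) • Y) * Y)) s := by
      have h3 : HasDerivAt (fun u : ℝ => exp (u • Y)) (exp ((1 - s) • Y) * Y) (1 - s) :=
        hasDerivAt_exp_smul_const Y (1 - s)
      have h4 : HasDerivAt (fun u : ℝ => 1 - u) (-1 : ℝ) s := by
        simpa using (hasDerivAt_id s).const_sub 1
      exact h3.scomp s h4
    have := h1.mul h2
    convert this using 1
    · rfl
    have hc : Commute (exp ((1 - s) • Y)) Y :=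
      (((Commute.refl Y).smul_left (1 - s)).exp_left)
    simp only [neg_one_smul, mul_neg, hc.eq]
    noncomm_ring
  have hint : IntervalIntegrable (fun s : ℝ => exp (s • X) * (X - Y) * exp ((1 - s) • Y))
      MeasureTheory.volume 0 1 := hcont.intervalIntegrable 0 1
  have := integral_eq_sub_of_hasDerivAt hderiv hint
  rw [this]
  simp [exp_zero]

/-- `X ↦ fromBlocks X 0 0 X` as a ring hom. -/
noncomputable def dRing (d : ℕ) :
    Matrix (Fin d) (Fin d) ℂ →+* Matrix (Fin d ⊕ Fin d) (Fin d ⊕ Fin d) ℂ where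
  toFun X := Matrix.fromBlocks X 0 0 X
  map_one' := Matrix.fromBlocks_one
  map_mul' X Y := by rw [Matrix.fromBlocks_multiply]; simp
  map_zero' := Matrix.fromBlocks_zero
  map_add' X Y := by rw [Matrix.fromBlocks_add]; simp

/-- `X ↦ fromBlocks X 0 0 X` as an ℝ-linear map. -/
noncomputable def dLin (d : ℕ) :
    Matrix (Fin d) (Fin d) ℂ →ₗ[ℝ] Matrix (Fin d ⊕ Fin d) (Fin d ⊕ Fin d) ℂ where
  toFun X := Matrix.fromBlocks X 0 0 X
  map_add' X Y := by rw [Matrix.fromBlocks_add]; simp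
  map_smul' r X := by rw [Matrix.fromBlocks_smul]; simp

/-- `X ↦ fromBlocks 0 X 0 0` as an ℝ-linear map. -/
noncomputable def uLin (d : ℕ) :
    Matrix (Fin d) (Fin d) ℂ →ₗ[ℝ] Matrix (Fin d ⊕ Fin d) (Fin d ⊕ Fin d) ℂ where
  toFun X := Matrix.fromBlocks 0 X 0 0
  map_add' X Y := by rw [Matrix.fromBlocks_add]; simp
  map_smul' r X := by rw [Matrix.fromBlocks_smul]; simp

lemma dRing_cont (d : ℕ) : Continuous (dRing d) :=
  (dLin d).continuous_of_finiteDimensional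

lemma exp_dRing (d : ℕ) (B : Matrix (Fin d) (Fin d) ℂ) :
    exp (Matrix.fromBlocks B 0 0 B) = Matrix.fromBlocks (exp B) 0 0 (exp B) :=
  (map_exp (dRing d) (dRing_cont d) B).symm

lemma exp_smul_dblock (d : ℕ) (A : Matrix (Fin d) (Fin d) ℂ) (c : ℝ) :
    exp (c • Matrix.fromBlocks A 0 0 A) =
      Matrix.fromBlocks (exp (c • A)) 0 0 (exp (c • A)) := by
  rw [Matrix.fromBlocks_smul, smul_zero, exp_dRing]

end VanLoanAux

open VanLoanAux in
/-- Van Loan auxiliary matrix identity: the exponential of the block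
upper-triangular matrix `[[A, C], [0, A]]` has the exponential `exp A` on the
diagonal blocks and the directional (Gateaux) derivative of `exp` at `A` in
direction `C`, given by the integral `∫₀¹ e^{sA} C e^{(1-s)A} ds`, in the
upper-right block. -/
theorem van_loan_auxiliary_matrix (d : ℕ) (A C : Matrix (Fin d) (Fin d) ℂ) :
    exp (Matrix.fromBlocks A C 0 A) =
      Matrix.fromBlocks (exp A)
        (∫ s in (0:ℝ)..1, exp (s • A) * C * exp ((1 - s) • A))
        0 (exp A) ∧
    (∫ s in (0:ℝ)..1, exp (s • A) * C * exp ((1 - s) • A)) =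
      deriv (fun t : ℝ => exp (A + t • C)) 0 := by
  have hgcont : Continuous fun s : ℝ => exp (s • A) * C * exp ((1 - s) • A) :=
    ((exp_continuous.comp (continuous_id.smul continuous_const)).mul continuous_const).mul
      (exp_continuous.comp ((continuous_const.sub continuous_id).smul continuous_const))
  have hMD : Matrix.fromBlocks A C 0 A - Matrix.fromBlocks A 0 0 A
      = Matrix.fromBlocks 0 C 0 0 := by
    rw [sub_eq_iff_eq_add, Matrix.fromBlocks_add]
    simp
  constructor
  · -- block identity
    have key : ∀ s : ℝ,
        exp (s • Matrix.fromBlocks A C 0 A) * Matrix.fromBlocks 0 C 0 0 =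
        exp (s • Matrix.fromBlocks A 0 0 A) * Matrix.fromBlocks 0 C 0 0 := by
      intro s
      have h2 := duhamel (s • Matrix.fromBlocks A C 0 A) (s • Matrix.fromBlocks A 0 0 A)
      have hintc : Continuous fun u : ℝ =>
          exp (u • (s • Matrix.fromBlocks A C 0 A)) *
            (s • Matrix.fromBlocks A C 0 A - s • Matrix.fromBlocks A 0 0 A) *
            exp ((1 - u) • (s • Matrix.fromBlocks A 0 0 A)) :=
        ((exp_continuous.comp (continuous_id.smul continuous_const)).mul continuous_const).mul
          (exp_continuous.comp ((continuous_const.sub continuous_id).smul continuous_const))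
      have hz : (∫ u in (0:ℝ)..1,
          exp (u • (s • Matrix.fromBlocks A C 0 A)) *
            (s • Matrix.fromBlocks A C 0 A - s • Matrix.fromBlocks A 0 0 A) *
            exp ((1 - u) • (s • Matrix.fromBlocks A 0 0 A))) *
            Matrix.fromBlocks 0 C 0 0 = 0 := by
        set L := (ContinuousLinearMap.mul ℝ
            (Matrix (Fin d ⊕ Fin d) (Fin d ⊕ Fin d) ℂ)).flip (Matrix.fromBlocks 0 C 0 0) with hL
        have hLa : ∀ x, L x = x * Matrix.fromBlocks 0 C 0 0 := fun x => rfl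
        rw [← hLa, ← L.intervalIntegral_comp_comm (hintc.intervalIntegrable 0 1)]
        have hzero : ∀ u : ℝ,
            L (exp (u • (s • Matrix.fromBlocks A C 0 A)) *
              (s • Matrix.fromBlocks A C 0 A - s • Matrix.fromBlocks A 0 0 A) *
              exp ((1 - u) • (s • Matrix.fromBlocks A 0 0 A))) = 0 := by
          intro u
          rw [hLa]
          rw [← smul_sub, hMD]
          rw [show (1 - u) • (s • Matrix.fromBlocks A 0 0 A)
              = ((1 - u) * s) • Matrix.fromBlocks A 0 0 A from smul_smul _ _ _,
            exp_smul_dblock]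
          simp only [mul_assoc, smul_mul_assoc]
          rw [Matrix.fromBlocks_multiply, Matrix.fromBlocks_multiply]
          simp
        simp only [hzero]
        simp
      erw [h2, add_mul, hz, add_zero]
      rfl
    have h1 := duhamel (Matrix.fromBlocks A C 0 A) (Matrix.fromBlocks A 0 0 A)
    rw [hMD] at h1
    have hcongr : (∫ s in (0:ℝ)..1,
        exp (s • Matrix.fromBlocks A C 0 A) * Matrix.fromBlocks 0 C 0 0 *
          exp ((1 - s) • Matrix.fromBlocks A 0 0 A)) =
        ∫ s in (0:ℝ)..1, uLin d (exp (s • A) * C * exp ((1 - s) • A)) := by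
      apply intervalIntegral.integral_congr
      intro s _
      dsimp only
      rw [key s, exp_smul_dblock, exp_smul_dblock]
      rw [Matrix.fromBlocks_multiply, Matrix.fromBlocks_multiply]
      show _ = Matrix.fromBlocks 0 (exp (s • A) * C * exp ((1 - s) • A)) 0 0
      simp [mul_assoc]
    erw [hcongr] at h1
    have hgint : @IntervalIntegrable _ PseudoMetricSpace.toUniformSpace.toTopologicalSpace _ (fun s : ℝ => exp (s • A) * C * exp ((1 - s) • A))
        MeasureTheory.volume 0 1 := hgcont.intervalIntegrable 0 1
    have hswap := (LinearMap.toContinuousLinearMap (uLin d)).intervalIntegral_comp_comm hgint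
    erw [LinearMap.coe_toContinuousLinearMap'] at hswap
    erw [hswap] at h1
    erw [h1, exp_dRing]
    show _ + Matrix.fromBlocks 0 _ 0 0 = _
    rw [Matrix.fromBlocks_add]
    simp
  · -- derivative identity
    have hψcont : Continuous fun t : ℝ =>
        ∫ s in (0:ℝ)..1, exp (s • (A + t • C)) * C * exp ((1 - s) • A) := by
      apply intervalIntegral.continuous_parametric_intervalIntegral_of_continuous'
      show Continuous fun p : ℝ × ℝ =>
        exp (p.2 • (A + p.1 • C)) * C * exp ((1 - p.2) • A)
      exact ((exp_continuous.comp (continuous_snd.smul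
          (continuous_const.add (continuous_fst.smul continuous_const)))).mul
          continuous_const).mul
        (exp_continuous.comp ((continuous_const.sub continuous_snd).smul continuous_const))
    have hfact : ∀ t : ℝ, exp (A + t • C) = exp A +
        t • ∫ s in (0:ℝ)..1, exp (s • (A + t • C)) * C * exp ((1 - s) • A) := by
      intro t
      erw [duhamel (A + t • C) A]
      congr 1
      rw [← intervalIntegral.integral_smul]
      apply intervalIntegral.integral_congr
      intro s _
      dsimp only
      rw [add_sub_cancel_left, mul_smul_comm, smul_mul_assoc]
      rfl
    have hD : HasDerivAt (fun t : ℝ => exp (A + t • C))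
        (∫ s in (0:ℝ)..1, exp (s • (A + (0:ℝ) • C)) * C * exp ((1 - s) • A)) 0 := by
      erw [hasDerivAt_iff_tendsto_slope]
      have hslope : ∀ᶠ t in nhdsWithin (0:ℝ) {(0:ℝ)}ᶜ,
          slope (fun t : ℝ => exp (A + t • C)) 0 t =
          ∫ s in (0:ℝ)..1, exp (s • (A + t • C)) * C * exp ((1 - s) • A) := by
        filter_upwards [self_mem_nhdsWithin] with t ht
        have ht' : (t : ℝ) ≠ 0 := ht
        rw [slope_def_module, hfact t, hfact 0]
        simp [ht', smul_smul, inv_mul_cancel₀]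
      rw [Filter.tendsto_congr' hslope]
      exact (hψcont.tendsto 0).mono_left nhdsWithin_le_nhds
    erw [hD.deriv]
    simp
end

section
/- For a skew-symmetric 3×3 real matrix S with parameters (x, y, z), defined by S = [[0, z, -y],[-z, 0, x],[y, -x, 0]], the matrix exponential satisfies the Rodrigues formula exp(tS) = I + (sin(tr)/r)·S + ((1 − cos(tr))/r²)·S², where r = √(x²+y²+z²) > 0. -/
open Matrix NormedSpace
open scoped Nat

attribute [local instance] Matrix.linftyOpNormedAddCommGroup Matrix.linftyOpNormedRing
  Matrix.linftyOpNormedAlgebra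

/-- Rodrigues' rotation formula: for the skew-symmetric matrix `S` built from
`(x, y, z)` with `r = √(x² + y² + z²) > 0`, the matrix exponential satisfies
`exp(tS) = I + (sin(tr)/r) S + ((1 − cos(tr))/r²) S²`. -/
theorem rodrigues_formula (x y z t : ℝ)
    (S : Matrix (Fin 3) (Fin 3) ℝ)
    (hS : S = !![0, z, -y; -z, 0, x; y, -x, 0])
    (r : ℝ) (hr : r = Real.sqrt (x ^ 2 + y ^ 2 + z ^ 2)) (hrpos : 0 < r) :
    NormedSpace.exp (t • S) =
      1 + (Real.sin (t * r) / r) • S + ((1 - Real.cos (t * r)) / r ^ 2) • S ^ 2 := by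
  have hrne : r ≠ 0 := ne_of_gt hrpos
  have hr2 : r ^ 2 = x ^ 2 + y ^ 2 + z ^ 2 := by
    rw [hr]; exact Real.sq_sqrt (by positivity)
  -- key algebraic identity
  have hS3 : S ^ 3 = (-(r ^ 2)) • S := by
    subst hS
    rw [hr2]
    ext i j
    fin_cases i <;> fin_cases j <;>
      simp [pow_succ, Matrix.mul_apply, Fin.sum_univ_succ] <;> ring
  -- odd powers
  have hodd : ∀ k : ℕ, S ^ (2 * k + 1) = ((-(r ^ 2)) ^ k) • S := by
    intro k
    induction k with
    | zero => simp
    | succ k ih =>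
      have h1 : 2 * (k + 1) + 1 = (2 * k + 1) + 2 := by ring
      have h2 : S * S ^ 2 = S ^ 3 := (pow_succ' S 2).symm
      rw [h1, pow_add, ih, Matrix.smul_mul, h2, hS3, smul_smul, ← pow_succ]
  -- even powers (k ≥ 1)
  have heven : ∀ k : ℕ, S ^ (2 * (k + 1)) = ((-(r ^ 2)) ^ k) • S ^ 2 := by
    intro k
    have h1 : 2 * (k + 1) = (2 * k + 1) + 1 := by ring
    rw [h1, pow_succ, hodd k, Matrix.smul_mul, ← pow_two]
  -- the even part of the exponential series
  set f : ℕ → Matrix (Fin 3) (Fin 3) ℝ := fun n => ((n ! : ℝ)⁻¹) • (t • S) ^ n with hf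
  have hcos := Real.hasSum_cos (t * r)
  have hsin := Real.hasSum_sin (t * r)
  have hcos1 : HasSum (fun k : ℕ => (-1 : ℝ) ^ (k + 1) * (t * r) ^ (2 * (k + 1)) / ↑(2 * (k + 1))!)
      (Real.cos (t * r) - ∑ i ∈ Finset.range 1,
        (-1 : ℝ) ^ i * (t * r) ^ (2 * i) / ↑(2 * i)!) := by
    exact (hasSum_nat_add_iff' 1).mpr hcos
  simp only [Finset.range_one, Finset.sum_singleton, pow_zero, mul_zero, Nat.factorial_zero,
    Nat.cast_one, div_one, one_mul] at hcos1
  -- even part has sum ((1 - cos(tr))/r²) • S²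
  have key_even : ∀ k : ℕ, f (2 * (k + 1)) =
      (-((-1 : ℝ) ^ (k + 1) * (t * r) ^ (2 * (k + 1)) / ↑(2 * (k + 1))!) / r ^ 2) • S ^ 2 := by
    intro k
    simp only [hf]
    rw [smul_pow, heven k, smul_smul, smul_smul]
    congr 1
    have hfac : ((2 * (k + 1))! : ℝ) ≠ 0 := Nat.cast_ne_zero.mpr (Nat.factorial_ne_zero _)
    field_simp
    ring
  have hEvenShift : HasSum (fun k : ℕ => f (2 * (k + 1)))
      (((1 - Real.cos (t * r)) / r ^ 2) • S ^ 2) := by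
    have h := ((hcos1.neg).div_const (r ^ 2)).smul_const (S ^ 2)
    rw [neg_sub] at h
    simpa only [key_even] using h
  have hEven : HasSum (fun k : ℕ => f (2 * k))
      (1 + ((1 - Real.cos (t * r)) / r ^ 2) • S ^ 2) := by
    have hshift : (fun k : ℕ => f (2 * (k + 1))) = fun k : ℕ => (fun n => f (2 * n)) (k + 1) := by
      ext k; rfl
    rw [hshift] at hEvenShift
    refine (hasSum_nat_add_iff' 1).mp ?_
    convert hEvenShift using 1
    · rfl
    simp [hf, add_comm]
  -- odd part has sum (sin(tr)/r) • S
  have key_odd : ∀ k : ℕ, f (2 * k + 1) =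
      ((-1 : ℝ) ^ k * (t * r) ^ (2 * k + 1) / ↑(2 * k + 1)! / r) • S := by
    intro k
    simp only [hf]
    rw [smul_pow, hodd k, smul_smul, smul_smul]
    congr 1
    have hfac : ((2 * k + 1)! : ℝ) ≠ 0 := Nat.cast_ne_zero.mpr (Nat.factorial_ne_zero _)
    field_simp
    ring
  have hOdd : HasSum (fun k : ℕ => f (2 * k + 1)) ((Real.sin (t * r) / r) • S) := by
    have h := (hsin.div_const r).smul_const S
    simpa only [key_odd] using h
  have htotal : HasSum f (1 + (Real.sin (t * r) / r) • S
      + ((1 - Real.cos (t * r)) / r ^ 2) • S ^ 2) := by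
    have h := hEven.even_add_odd hOdd
    convert h using 1
    abel
  rw [exp_eq_tsum ℝ]
  exact htotal.tsum_eq
end
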